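/- Under the D1Q2 scheme with s ∈ (0,1], λ ≥ M, and equilibrium initial data f^±_j^0 = h^±(u_j^0) with u_j^0 ∈ [α,β], the sum of the sequential total variations in space is nonincreasing: TV(f⁺^{n+1}) + TV(f⁻^{n+1}) ≤ TV(f⁺^n) + TV(f⁻^n) for all n ∈ ℕ. -/

import Mathlib

/-- Equilibrium distribution function for velocity `+λ`. -/
noncomputable def hp (lam : ℝ) (flux : ℝ → ℝ) (ξ : ℝ) : ℝ := (lam * ξ + flux ξ) / (2 * lam)

/-- Equilibrium distribution function for velocity `-λ`. -/
noncomputable def hm (lam : ℝ) (flux : ℝ → ℝ) (ξ : ℝ) : ℝ := (lam * ξ - flux ξ) / (2 * lam)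

/-- Sequential total variation of a sequence indexed by `ℤ`. -/
noncomputable def tvSeq (w : ℤ → ℝ) : ENNReal := ∑' j : ℤ, ENNReal.ofReal |w (j + 1) - w j|

section Aux

variable (flux : ℝ → ℝ) (lam : ℝ)

lemma hp_add_hm (hl : lam ≠ 0) (x : ℝ) : hp lam flux x + hm lam flux x = x := by
  unfold hp hm; rw [← add_div, div_eq_iff (mul_ne_zero two_ne_zero hl)]; ring

lemma flux_lip {α β M : ℝ} (hflux : ContDiff ℝ 1 flux)
    (hM : ∀ ξ ∈ Set.Icc α β, |deriv flux ξ| ≤ M)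
    {a b : ℝ} (ha : a ∈ Set.Icc α β) (hb : b ∈ Set.Icc α β) :
    |flux b - flux a| ≤ M * |b - a| := by
  have := (convex_Icc α β).norm_image_sub_le_of_norm_deriv_le
    (f := flux) (fun x _ => (hflux.differentiable one_ne_zero).differentiableAt)
    (fun x hx => hM x hx) ha hb
  simpa [Real.norm_eq_abs] using this

variable {flux lam} {α β M : ℝ}

lemma hp_mono (hflux : ContDiff ℝ 1 flux) (hlampos : 0 < lam)
    (hM : ∀ ξ ∈ Set.Icc α β, |deriv flux ξ| ≤ M) (hlam : M ≤ lam)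
    {a b : ℝ} (ha : a ∈ Set.Icc α β) (hb : b ∈ Set.Icc α β) (hab : a ≤ b) :
    hp lam flux a ≤ hp lam flux b := by
  have hlip := flux_lip flux hflux hM ha hb
  have hba : |b - a| = b - a := abs_of_nonneg (by linarith)
  rw [hba] at hlip
  obtain ⟨h1, h2⟩ := abs_le.mp hlip
  have h3 : M * (b - a) ≤ lam * (b - a) := by nlinarith
  have : lam * a + flux a ≤ lam * b + flux b := by linarith
  exact div_le_div_of_nonneg_right this (by linarith)

lemma hm_mono (hflux : ContDiff ℝ 1 flux) (hlampos : 0 < lam)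
    (hM : ∀ ξ ∈ Set.Icc α β, |deriv flux ξ| ≤ M) (hlam : M ≤ lam)
    {a b : ℝ} (ha : a ∈ Set.Icc α β) (hb : b ∈ Set.Icc α β) (hab : a ≤ b) :
    hm lam flux a ≤ hm lam flux b := by
  have hlip := flux_lip flux hflux hM ha hb
  have hba : |b - a| = b - a := abs_of_nonneg (by linarith)
  rw [hba] at hlip
  obtain ⟨h1, h2⟩ := abs_le.mp hlip
  have h3 : M * (b - a) ≤ lam * (b - a) := by nlinarith
  have : lam * a - flux a ≤ lam * b - flux b := by linarith
  exact div_le_div_of_nonneg_right this (by linarith)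

/-- The key contraction identity. -/
lemma key_eq (hflux : ContDiff ℝ 1 flux) (hlampos : 0 < lam)
    (hM : ∀ ξ ∈ Set.Icc α β, |deriv flux ξ| ≤ M) (hlam : M ≤ lam)
    {a b : ℝ} (ha : a ∈ Set.Icc α β) (hb : b ∈ Set.Icc α β) :
    |hp lam flux b - hp lam flux a| + |hm lam flux b - hm lam flux a| = |b - a| := by
  have hsum : ∀ x, hp lam flux x + hm lam flux x = x := hp_add_hm flux lam hlampos.ne'
  rcases le_total a b with hab | hab
  · rw [abs_of_nonneg (by linarith [hp_mono hflux hlampos hM hlam ha hb hab]),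
      abs_of_nonneg (by linarith [hm_mono hflux hlampos hM hlam ha hb hab]),
      abs_of_nonneg (by linarith)]
    have := hsum a; have := hsum b; linarith
  · rw [abs_of_nonpos (by linarith [hp_mono hflux hlampos hM hlam hb ha hab]),
      abs_of_nonpos (by linarith [hm_mono hflux hlampos hM hlam hb ha hab]),
      abs_of_nonpos (by linarith)]
    have := hsum a; have := hsum b; linarith

end Aux

/-- Spatial total variation decrease for the D1Q2 scheme. -/
theorem stmt4 (flux : ℝ → ℝ) (hflux : ContDiff ℝ 1 flux)
    (α β M lam s : ℝ) (hαβ : α ≤ β) (hlampos : 0 < lam)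
    (hs : s ∈ Set.Ioc (0 : ℝ) 1)
    (hM : ∀ ξ ∈ Set.Icc α β, |deriv flux ξ| ≤ M) (hlam : M ≤ lam)
    (fp fm u : ℕ → ℤ → ℝ)
    (hu : ∀ n j, u n j = fp n j + fm n j)
    (hrecp : ∀ n j, fp (n + 1) j = (1 - s) * fp n (j - 1) + s * hp lam flux (u n (j - 1)))
    (hrecm : ∀ n j, fm (n + 1) j = (1 - s) * fm n (j + 1) + s * hm lam flux (u n (j + 1)))
    (hinit : ∀ j, u 0 j ∈ Set.Icc α β)
    (hinitp : ∀ j, fp 0 j = hp lam flux (u 0 j))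
    (hinitm : ∀ j, fm 0 j = hm lam flux (u 0 j)) :
    ∀ n : ℕ, tvSeq (fp (n + 1)) + tvSeq (fm (n + 1)) ≤ tvSeq (fp n) + tvSeq (fm n) := by
  obtain ⟨hs0, hs1⟩ := hs
  have hαIcc : α ∈ Set.Icc α β := ⟨le_rfl, hαβ⟩
  have hβIcc : β ∈ Set.Icc α β := ⟨hαβ, le_rfl⟩
  have hsum : ∀ x, hp lam flux x + hm lam flux x = x := hp_add_hm flux lam hlampos.ne'
  have hpmono := fun {a b} ha hb hab => hp_mono (α := α) (β := β) hflux hlampos hM hlam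
    (a := a) (b := b) ha hb hab
  have hmmono := fun {a b} ha hb hab => hm_mono (α := α) (β := β) hflux hlampos hM hlam
    (a := a) (b := b) ha hb hab
  -- invariant: fp in [hp α, hp β], fm in [hm α, hm β]
  have hinv : ∀ n, (∀ j, fp n j ∈ Set.Icc (hp lam flux α) (hp lam flux β)) ∧
      (∀ j, fm n j ∈ Set.Icc (hm lam flux α) (hm lam flux β)) := by
    intro n
    induction n with
    | zero =>
      constructor
      · intro j; rw [hinitp j]
        exact ⟨hpmono hαIcc (hinit j) (hinit j).1, hpmono (hinit j) hβIcc (hinit j).2⟩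
      · intro j; rw [hinitm j]
        exact ⟨hmmono hαIcc (hinit j) (hinit j).1, hmmono (hinit j) hβIcc (hinit j).2⟩
    | succ n ih =>
      have huIcc : ∀ j, u n j ∈ Set.Icc α β := by
        intro j
        have h1 := (ih.1 j).1; have h2 := (ih.1 j).2
        have h3 := (ih.2 j).1; have h4 := (ih.2 j).2
        rw [hu n j]
        constructor
        · have := hsum α; linarith
        · have := hsum β; linarith
      constructor
      · intro j
        rw [hrecp n j]
        have h1 := ih.1 (j - 1)
        have h2 : hp lam flux (u n (j - 1)) ∈ Set.Icc (hp lam flux α) (hp lam flux β) :=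
          ⟨hpmono hαIcc (huIcc _) (huIcc _).1, hpmono (huIcc _) hβIcc (huIcc _).2⟩
        exact (convex_Icc _ _) h1 h2 (by linarith) (le_of_lt hs0) (by ring)
      · intro j
        rw [hrecm n j]
        have h1 := ih.2 (j + 1)
        have h2 : hm lam flux (u n (j + 1)) ∈ Set.Icc (hm lam flux α) (hm lam flux β) :=
          ⟨hmmono hαIcc (huIcc _) (huIcc _).1, hmmono (huIcc _) hβIcc (huIcc _).2⟩
        exact (convex_Icc _ _) h1 h2 (by linarith) (le_of_lt hs0) (by ring)
  have huIcc : ∀ n j, u n j ∈ Set.Icc α β := by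
    intro n j
    have h1 := ((hinv n).1 j).1; have h2 := ((hinv n).1 j).2
    have h3 := ((hinv n).2 j).1; have h4 := ((hinv n).2 j).2
    rw [hu n j]
    exact ⟨by have := hsum α; linarith, by have := hsum β; linarith⟩
  intro n
  -- relaxed sequences
  set G : ℤ → ℝ := fun j => (1 - s) * fp n j + s * hp lam flux (u n j) with hG
  set H : ℤ → ℝ := fun j => (1 - s) * fm n j + s * hm lam flux (u n j) with hH
  have hGp : ∀ j, fp (n + 1) j = G (j - 1) := fun j => hrecp n j
  have hHm : ∀ j, fm (n + 1) j = H (j + 1) := fun j => hrecm n j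
  have htvp : tvSeq (fp (n + 1)) = ∑' j : ℤ, ENNReal.ofReal |G (j + 1) - G j| := by
    unfold tvSeq
    rw [← (Equiv.subRight (1:ℤ)).tsum_eq (fun k => ENNReal.ofReal |G (k + 1) - G k|)]
    apply tsum_congr; intro j
    simp only [Equiv.subRight_apply]
    rw [hGp (j + 1), hGp j]
    have e1 : j + 1 - 1 = j - 1 + 1 := by ring
    rw [e1]
  have htvm : tvSeq (fm (n + 1)) = ∑' j : ℤ, ENNReal.ofReal |H (j + 1) - H j| := by
    unfold tvSeq
    rw [← (Equiv.addRight (1:ℤ)).tsum_eq (fun k => ENNReal.ofReal |H (k + 1) - H k|)]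
    apply tsum_congr; intro j
    simp only [Equiv.coe_addRight]
    rw [hHm (j + 1), hHm j]
  rw [htvp, htvm, ← ENNReal.tsum_add]
  unfold tvSeq
  rw [← ENNReal.tsum_add]
  apply ENNReal.tsum_le_tsum
  intro j
  -- pointwise estimate
  have ha := huIcc n j
  have hb := huIcc n (j + 1)
  have hkey := key_eq hflux hlampos hM hlam ha hb
  have hGdiff : G (j + 1) - G j
      = (1 - s) * (fp n (j+1) - fp n j) + s * (hp lam flux (u n (j+1)) - hp lam flux (u n j)) := by
    simp only [hG]; ring
  have hHdiff : H (j + 1) - H j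
      = (1 - s) * (fm n (j+1) - fm n j) + s * (hm lam flux (u n (j+1)) - hm lam flux (u n j)) := by
    simp only [hH]; ring
  have habs : |G (j + 1) - G j| + |H (j + 1) - H j|
      ≤ |fp n (j+1) - fp n j| + |fm n (j+1) - fm n j| := by
    have e1 : |G (j + 1) - G j| ≤ (1 - s) * |fp n (j+1) - fp n j|
        + s * |hp lam flux (u n (j+1)) - hp lam flux (u n j)| := by
      rw [hGdiff]
      calc _ ≤ |(1 - s) * (fp n (j+1) - fp n j)|
          + |s * (hp lam flux (u n (j+1)) - hp lam flux (u n j))| := abs_add_le _ _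
        _ = _ := by rw [abs_mul, abs_mul, abs_of_nonneg (by linarith), abs_of_nonneg hs0.le]
    have e2 : |H (j + 1) - H j| ≤ (1 - s) * |fm n (j+1) - fm n j|
        + s * |hm lam flux (u n (j+1)) - hm lam flux (u n j)| := by
      rw [hHdiff]
      calc _ ≤ |(1 - s) * (fm n (j+1) - fm n j)|
          + |s * (hm lam flux (u n (j+1)) - hm lam flux (u n j))| := abs_add_le _ _
        _ = _ := by rw [abs_mul, abs_mul, abs_of_nonneg (by linarith), abs_of_nonneg hs0.le]
    have e3 : |u n (j+1) - u n j| ≤ |fp n (j+1) - fp n j| + |fm n (j+1) - fm n j| := by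
      rw [hu n (j+1), hu n j]
      calc |fp n (j+1) + fm n (j+1) - (fp n j + fm n j)|
          = |(fp n (j+1) - fp n j) + (fm n (j+1) - fm n j)| := by ring_nf
        _ ≤ _ := abs_add_le _ _
    nlinarith [abs_nonneg (fp n (j+1) - fp n j), abs_nonneg (fm n (j+1) - fm n j)]
  calc ENNReal.ofReal |G (j + 1) - G j| + ENNReal.ofReal |H (j + 1) - H j|
      = ENNReal.ofReal (|G (j + 1) - G j| + |H (j + 1) - H j|) :=
        (ENNReal.ofReal_add (abs_nonneg _) (abs_nonneg _)).symm
    _ ≤ ENNReal.ofReal (|fp n (j+1) - fp n j| + |fm n (j+1) - fm n j|) :=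
        ENNReal.ofReal_le_ofReal habs
    _ = _ := ENNReal.ofReal_add (abs_nonneg _) (abs_nonneg _)
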